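/- Let A be a densely defined dissipative operator on a Hilbert space G × H₁ of the block form M = [[𝒜, B],[-B*, C]] with domain (D(𝒜) ∩ D(B*)) × (D(B) ∩ D(C)), where C is boundedly invertible, B ∈ L(D(C), G), and C^{-1}B* extends to a bounded operator. Then M is closable with closure having domain {(u,v) : u ∈ D(closure(𝒜 + BC^{-1}B*)), -C^{-1}B*u + v ∈ D(C)}, provided 𝒜 + BC^{-1}B* is closable. -/

import Mathlib

open scoped ComplexInnerProductSpace



private lemma aux_closure_map {E F : Type*} [NormedAddCommGroup E] [NormedSpace ℂ E]
    [NormedAddCommGroup F] [NormedSpace ℂ F] (e : E ≃L[ℂ] F) (p : Submodule ℂ E) :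
    (p.map ((e : E →L[ℂ] F) : E →ₗ[ℂ] F)).topologicalClosure
      = p.topologicalClosure.map ((e : E →L[ℂ] F) : E →ₗ[ℂ] F) := by
  apply SetLike.ext'
  rw [Submodule.topologicalClosure_coe, Submodule.map_coe, Submodule.map_coe,
    Submodule.topologicalClosure_coe]
  have h := e.toHomeomorph.image_closure (p : Set E)
  simpa using h.symm

private lemma aux_closure_prod {E F : Type*} [NormedAddCommGroup E] [NormedSpace ℂ E]
    [NormedAddCommGroup F] [NormedSpace ℂ F] (p : Submodule ℂ E) (q : Submodule ℂ F) :
    (p.prod q).topologicalClosure = p.topologicalClosure.prod q.topologicalClosure := by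
  apply SetLike.ext'
  rw [Submodule.topologicalClosure_coe, Submodule.prod_coe, Submodule.prod_coe,
    Submodule.topologicalClosure_coe, Submodule.topologicalClosure_coe, closure_prod_eq]

private lemma pmap_congr {E F : Type*} [AddCommGroup E] [Module ℂ E] [AddCommGroup F]
    [Module ℂ F] (f : E →ₗ.[ℂ] F) {a b : E} (ha : a ∈ f.domain) (hb : b ∈ f.domain)
    (h : a = b) : f ⟨a, ha⟩ = f ⟨b, hb⟩ := by cases h; rfl

private lemma pmap_add {E F : Type*} [AddCommGroup E] [Module ℂ E] [AddCommGroup F]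
    [Module ℂ F] (f : E →ₗ.[ℂ] F) {a b : E} (ha : a ∈ f.domain) (hb : b ∈ f.domain)
    (hab : a + b ∈ f.domain) : f ⟨a + b, hab⟩ = f ⟨a, ha⟩ + f ⟨b, hb⟩ :=
  f.map_add ⟨a, ha⟩ ⟨b, hb⟩

private lemma pmap_sub {E F : Type*} [AddCommGroup E] [Module ℂ E] [AddCommGroup F]
    [Module ℂ F] (f : E →ₗ.[ℂ] F) {a b : E} (ha : a ∈ f.domain) (hb : b ∈ f.domain)
    (hab : a - b ∈ f.domain) : f ⟨a - b, hab⟩ = f ⟨a, ha⟩ - f ⟨b, hb⟩ :=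
  f.map_sub ⟨a, ha⟩ ⟨b, hb⟩

/-- Atkinson–Langer–Mennicken–Shkalikov: for a densely defined dissipative
block operator M = [[𝒜, B],[-B*, C]] with domain (D(𝒜) ∩ D(B*)) × (D(B) ∩ D(C)), where C is
boundedly invertible, B ∈ L(D(C), G) and C⁻¹B* extends to a bounded operator T, M is closable
and, provided S = 𝒜 + BC⁻¹B* is closable, the domain of the closure of M is
{(u,v) : u ∈ D(closure S), -C⁻¹B*u + v ∈ D(C)}. -/
theorem stmt_11 {G H₁ : Type*}
    [NormedAddCommGroup G] [InnerProductSpace ℂ G] [CompleteSpace G]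
    [NormedAddCommGroup H₁] [InnerProductSpace ℂ H₁] [CompleteSpace H₁]
    (𝒜 : G →ₗ.[ℂ] G) (B : H₁ →ₗ.[ℂ] G) (Bstar : G →ₗ.[ℂ] H₁) (C : H₁ →ₗ.[ℂ] H₁)
    -- C is boundedly invertible, with bounded inverse Cinv:
    (Cinv : H₁ →L[ℂ] H₁)
    (hCmem : ∀ y : H₁, Cinv y ∈ C.domain)
    (hCright : ∀ y : H₁, C ⟨Cinv y, hCmem y⟩ = y)
    (hCleft : ∀ v (hv : v ∈ C.domain), Cinv (C ⟨v, hv⟩) = v)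
    -- B ∈ L(D(C), G): D(C) ⊆ D(B) and B is bounded for the graph norm of D(C):
    (hBC : ∀ v ∈ C.domain, v ∈ B.domain)
    (K : ℝ)
    (hBbdd : ∀ v (hv : v ∈ C.domain), ‖B ⟨v, hBC v hv⟩‖ ≤ K * (‖v‖ + ‖C ⟨v, hv⟩‖))
    -- C⁻¹ B* extends to a bounded linear operator T on G:
    (T : G →L[ℂ] H₁)
    (hT : ∀ u (hu : u ∈ Bstar.domain), T u = Cinv (Bstar ⟨u, hu⟩))
    -- the block operator matrix M = [[𝒜, B],[-B*, C]]:
    (M : (G × H₁) →ₗ.[ℂ] (G × H₁))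
    (hMdom : M.domain = (𝒜.domain ⊓ Bstar.domain).prod (B.domain ⊓ C.domain))
    (hM : ∀ (u : G) (v : H₁) (hu𝒜 : u ∈ 𝒜.domain) (huB : u ∈ Bstar.domain)
        (hvB : v ∈ B.domain) (hvC : v ∈ C.domain) (hx : (u, v) ∈ M.domain),
        M ⟨(u, v), hx⟩ = (𝒜 ⟨u, hu𝒜⟩ + B ⟨v, hvB⟩, -Bstar ⟨u, huB⟩ + C ⟨v, hvC⟩))
    -- M is densely defined and dissipative:
    (hdense : Dense (M.domain : Set (G × H₁)))
    (hdissip : ∀ x : M.domain, (⟪(M x).1, (x : G × H₁).1⟫ + ⟪(M x).2, (x : G × H₁).2⟫).re ≤ 0)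
    -- S = 𝒜 + B C⁻¹ B*:
    (S : G →ₗ.[ℂ] G)
    (hSdom : S.domain = 𝒜.domain ⊓ Bstar.domain)
    (hS : ∀ u (hu𝒜 : u ∈ 𝒜.domain) (huB : u ∈ Bstar.domain) (hu : u ∈ S.domain),
        S ⟨u, hu⟩ = 𝒜 ⟨u, hu𝒜⟩
          + B ⟨Cinv (Bstar ⟨u, huB⟩), hBC _ (hCmem _)⟩)
    -- provided 𝒜 + BC⁻¹B* is closable:
    (hScl : S.IsClosable) :
    M.IsClosable ∧
      ∀ (u : G) (v : H₁),
        (u, v) ∈ M.closure.domain ↔ u ∈ S.closure.domain ∧ v - T u ∈ C.domain := by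
  -- B ∘ C⁻¹ extends to a bounded operator BCinv
  obtain ⟨BCinv, hBCinv⟩ : ∃ BCinv : H₁ →L[ℂ] G,
      ∀ y, BCinv y = B ⟨Cinv y, hBC _ (hCmem _)⟩ := by
    refine ⟨LinearMap.mkContinuous
      { toFun := fun y => B ⟨Cinv y, hBC _ (hCmem _)⟩
        map_add' := fun y z => by
          rw [← B.map_add]
          exact pmap_congr B _ _ (by simp)
        map_smul' := fun c y => by
          rw [← B.map_smul]
          exact pmap_congr B _ _ (by simp) }
      ((max K 0) * (‖Cinv‖ + 1)) (fun y => ?_), fun y => rfl⟩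
    have h1 := hBbdd (Cinv y) (hCmem y)
    rw [hCright y] at h1
    have h2 : ‖Cinv y‖ ≤ ‖Cinv‖ * ‖y‖ := Cinv.le_opNorm y
    have h3 : (0:ℝ) ≤ ‖y‖ := norm_nonneg _
    have h4 : (0:ℝ) ≤ ‖Cinv y‖ := norm_nonneg _
    have h5 : K ≤ max K 0 := le_max_left _ _
    have h6 : (0:ℝ) ≤ max K 0 := le_max_right _ _
    calc ‖B ⟨Cinv y, hBC _ (hCmem _)⟩‖ ≤ K * (‖Cinv y‖ + ‖y‖) := h1
      _ ≤ max K 0 * (‖Cinv y‖ + ‖y‖) := by nlinarith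
      _ ≤ max K 0 * (‖Cinv‖ * ‖y‖ + ‖y‖) := by nlinarith
      _ = ((max K 0) * (‖Cinv‖ + 1)) * ‖y‖ := by ring
  -- the continuous linear equivalence Φ
  obtain ⟨Φ, hΦ⟩ : ∃ Φ : ((G × G) × H₁ × H₁) ≃L[ℂ] ((G × H₁) × G × H₁),
      ∀ x : (G × G) × H₁ × H₁,
        Φ x = ((x.1.1, x.2.1 + T x.1.1), (x.1.2 + BCinv x.2.2, x.2.2)) := by
    let p1 : ((G × G) × H₁ × H₁) →L[ℂ] G :=
      (ContinuousLinearMap.fst ℂ G G).comp (ContinuousLinearMap.fst ℂ (G × G) (H₁ × H₁))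
    let p2 : ((G × G) × H₁ × H₁) →L[ℂ] G :=
      (ContinuousLinearMap.snd ℂ G G).comp (ContinuousLinearMap.fst ℂ (G × G) (H₁ × H₁))
    let p3 : ((G × G) × H₁ × H₁) →L[ℂ] H₁ :=
      (ContinuousLinearMap.fst ℂ H₁ H₁).comp (ContinuousLinearMap.snd ℂ (G × G) (H₁ × H₁))
    let p4 : ((G × G) × H₁ × H₁) →L[ℂ] H₁ :=
      (ContinuousLinearMap.snd ℂ H₁ H₁).comp (ContinuousLinearMap.snd ℂ (G × G) (H₁ × H₁))
    let q1 : ((G × H₁) × G × H₁) →L[ℂ] G :=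
      (ContinuousLinearMap.fst ℂ G H₁).comp (ContinuousLinearMap.fst ℂ (G × H₁) (G × H₁))
    let q2 : ((G × H₁) × G × H₁) →L[ℂ] H₁ :=
      (ContinuousLinearMap.snd ℂ G H₁).comp (ContinuousLinearMap.fst ℂ (G × H₁) (G × H₁))
    let q3 : ((G × H₁) × G × H₁) →L[ℂ] G :=
      (ContinuousLinearMap.fst ℂ G H₁).comp (ContinuousLinearMap.snd ℂ (G × H₁) (G × H₁))
    let q4 : ((G × H₁) × G × H₁) →L[ℂ] H₁ :=
      (ContinuousLinearMap.snd ℂ G H₁).comp (ContinuousLinearMap.snd ℂ (G × H₁) (G × H₁))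
    refine ⟨ContinuousLinearEquiv.equivOfInverse
      ((p1.prod (p3 + T.comp p1)).prod ((p2 + BCinv.comp p4).prod p4))
      ((q1.prod (q3 - BCinv.comp q4)).prod ((q2 - T.comp q1).prod q4)) ?_ ?_, fun x => rfl⟩
    · intro x
      ext <;>
        simp [p1, p2, p3, p4, q1, q2, q3, q4, ContinuousLinearMap.prod_apply]
    · intro x
      ext <;>
        simp [p1, p2, p3, p4, q1, q2, q3, q4, ContinuousLinearMap.prod_apply]
  -- membership of T u in the domain of C
  have hTmem : ∀ u (hu : u ∈ Bstar.domain), T u ∈ C.domain := by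
    intro u hu; rw [hT u hu]; exact hCmem _
  -- the graph identity: graph M = Φ (graph S × graph C)
  have hgraph : M.graph
      = (S.graph.prod C.graph).map ((Φ : ((G × G) × H₁ × H₁) →L[ℂ] ((G × H₁) × G × H₁)) : ((G × G) × H₁ × H₁) →ₗ[ℂ] ((G × H₁) × G × H₁)) := by
    ext z
    constructor
    · intro hz
      rw [LinearPMap.mem_graph_iff] at hz
      obtain ⟨⟨⟨u, v⟩, hx⟩, hx1, hx2⟩ := hz
      have hxd := hx
      rw [hMdom, Submodule.mem_prod] at hxd
      obtain ⟨hu', hv'⟩ := hxd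
      rw [Submodule.mem_inf] at hu' hv'
      obtain ⟨hu𝒜, huB⟩ := hu'
      obtain ⟨hvB, hvC⟩ := hv'
      have huS : u ∈ S.domain := by rw [hSdom]; exact ⟨hu𝒜, huB⟩
      have hTu : T u ∈ C.domain := hTmem u huB
      have hvT : v - T u ∈ C.domain := C.domain.sub_mem hvC hTu
      refine Submodule.mem_map.mpr ⟨((u, S ⟨u, huS⟩), (v - T u, C ⟨v - T u, hvT⟩)),
        Submodule.mem_prod.mpr ⟨S.mem_graph ⟨u, huS⟩, C.mem_graph ⟨v - T u, hvT⟩⟩, ?_⟩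
      rw [hM u v hu𝒜 huB hvB hvC hx] at hx2
      simp only [ContinuousLinearMap.coe_coe, ContinuousLinearEquiv.coe_coe]
      rw [hΦ]
      show ((u, v - T u + T u), (S ⟨u, huS⟩ + BCinv (C ⟨v - T u, hvT⟩), C ⟨v - T u, hvT⟩)) = z
      have e3 : BCinv (C ⟨v - T u, hvT⟩) = B ⟨v - T u, hBC _ hvT⟩ := by
        rw [hBCinv]
        exact pmap_congr B _ _ (hCleft _ hvT)
      have e4 : B ⟨v - T u, hBC _ hvT⟩ = B ⟨v, hvB⟩ - B ⟨T u, hBC _ hTu⟩ :=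
        pmap_sub B _ _ _
      have e5 : B ⟨T u, hBC _ hTu⟩ = B ⟨Cinv (Bstar ⟨u, huB⟩), hBC _ (hCmem _)⟩ :=
        pmap_congr B _ _ (hT u huB)
      have e6 : C ⟨v - T u, hvT⟩ = C ⟨v, hvC⟩ - C ⟨T u, hTu⟩ := pmap_sub C _ _ _
      have e7 : C ⟨T u, hTu⟩ = Bstar ⟨u, huB⟩ := by
        have := pmap_congr C hTu (hCmem (Bstar ⟨u, huB⟩)) (hT u huB)
        rw [this, hCright]
      refine Prod.ext ?_ ?_
      · rw [← hx1]
        exact Prod.ext rfl (sub_add_cancel v (T u))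
      · rw [← hx2]
        refine Prod.ext ?_ ?_
        · show S ⟨u, huS⟩ + BCinv (C ⟨v - T u, hvT⟩) = 𝒜 ⟨u, hu𝒜⟩ + B ⟨v, hvB⟩
          rw [e3, e4, e5, hS u hu𝒜 huB huS]
          abel
        · show C ⟨v - T u, hvT⟩ = -Bstar ⟨u, huB⟩ + C ⟨v, hvC⟩
          rw [e6, e7]
          abel
    · intro hz
      obtain ⟨w, hw, rfl⟩ := Submodule.mem_map.mp hz
      obtain ⟨hw1, hw2⟩ := Submodule.mem_prod.mp hw
      obtain ⟨⟨w11, w12⟩, w21, w22⟩ := w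
      rw [LinearPMap.mem_graph_iff] at hw1 hw2
      obtain ⟨⟨u, huS⟩, hu1, hu2⟩ := hw1
      obtain ⟨⟨m, hmC⟩, hm1, hm2⟩ := hw2
      simp only at hu1 hu2 hm1 hm2
      subst hu1; subst hm1; subst hu2; subst hm2
      have hu' : u ∈ 𝒜.domain ⊓ Bstar.domain := hSdom ▸ huS
      obtain ⟨hu𝒜, huB⟩ := Submodule.mem_inf.mp hu'
      have hTu : T u ∈ C.domain := hTmem u huB
      have hmT : m + T u ∈ C.domain := C.domain.add_mem hmC hTu
      have hmTB : m + T u ∈ B.domain := hBC _ hmT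
      have hdom : (u, m + T u) ∈ M.domain := by
        rw [hMdom, Submodule.mem_prod]
        exact ⟨Submodule.mem_inf.mpr ⟨hu𝒜, huB⟩, Submodule.mem_inf.mpr ⟨hmTB, hmT⟩⟩
      rw [LinearPMap.mem_graph_iff]
      refine ⟨⟨(u, m + T u), hdom⟩, ?_, ?_⟩
      · simp only [ContinuousLinearMap.coe_coe, ContinuousLinearEquiv.coe_coe, hΦ]
      · simp only [ContinuousLinearMap.coe_coe, ContinuousLinearEquiv.coe_coe, hΦ]
        rw [hM u (m + T u) hu𝒜 huB hmTB hmT hdom]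
        have e1 : B ⟨m + T u, hmTB⟩ = B ⟨m, hBC _ hmC⟩ + B ⟨T u, hBC _ hTu⟩ :=
          pmap_add B _ _ _
        have e2 : B ⟨T u, hBC _ hTu⟩ = B ⟨Cinv (Bstar ⟨u, huB⟩), hBC _ (hCmem _)⟩ :=
          pmap_congr B _ _ (hT u huB)
        have e3 : BCinv (C ⟨m, hmC⟩) = B ⟨m, hBC _ hmC⟩ := by
          rw [hBCinv]
          exact pmap_congr B _ _ (hCleft _ hmC)
        have e4 : C ⟨m + T u, hmT⟩ = C ⟨m, hmC⟩ + C ⟨T u, hTu⟩ := pmap_add C _ _ _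
        have e5 : C ⟨T u, hTu⟩ = Bstar ⟨u, huB⟩ := by
          have := pmap_congr C hTu (hCmem (Bstar ⟨u, huB⟩)) (hT u huB)
          rw [this, hCright]
        refine Prod.ext ?_ ?_
        · simp only
          rw [e1, e2, e3, hS u hu𝒜 huB huS]
          abel
        · simp only
          rw [e4, e5]
          abel
  -- C is closed
  have hCclosed : C.graph.topologicalClosure = C.graph := by
    apply SetLike.ext'
    rw [Submodule.topologicalClosure_coe]
    apply IsClosed.closure_eq
    have hset : (C.graph : Set (H₁ × H₁)) = {x : H₁ × H₁ | x.1 = Cinv x.2} := by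
      ext ⟨v, w⟩
      simp only [SetLike.mem_coe, LinearPMap.mem_graph_iff, Set.mem_setOf_eq]
      constructor
      · rintro ⟨⟨v', hv'⟩, h1, h2⟩
        simp only at h1 h2
        subst h1; subst h2
        exact (hCleft v' hv').symm
      · intro h
        exact ⟨⟨Cinv w, hCmem w⟩, h.symm, hCright w⟩
    rw [hset]
    exact isClosed_eq continuous_fst (Cinv.continuous.comp continuous_snd)
  -- the closure of the graph of M
  have hclos : M.graph.topologicalClosure
      = (S.closure.graph.prod C.graph).map
        ((Φ : ((G × G) × H₁ × H₁) →L[ℂ] ((G × H₁) × G × H₁)) : ((G × G) × H₁ × H₁) →ₗ[ℂ] ((G × H₁) × G × H₁)) := by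
    rw [hgraph, aux_closure_map, aux_closure_prod, hCclosed,
      ← hScl.graph_closure_eq_closure_graph]
  -- the closure is a graph
  have hker : ∀ x ∈ (S.closure.graph.prod C.graph).map
      ((Φ : ((G × G) × H₁ × H₁) →L[ℂ] ((G × H₁) × G × H₁)) : ((G × G) × H₁ × H₁) →ₗ[ℂ] ((G × H₁) × G × H₁)), x.1 = 0 → x.2 = 0 := by
    intro x hx h0
    obtain ⟨w, hw, rfl⟩ := Submodule.mem_map.mp hx
    obtain ⟨hw1, hw2⟩ := Submodule.mem_prod.mp hw
    obtain ⟨⟨w11, w12⟩, w21, w22⟩ := w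
    simp only [ContinuousLinearMap.coe_coe, ContinuousLinearEquiv.coe_coe, hΦ] at h0 ⊢
    simp only [Prod.mk_eq_zero] at h0 ⊢
    obtain ⟨h01, h02⟩ := h0
    subst h01
    have h21 : w21 = 0 := by simpa using h02
    subst h21
    have h12 : w12 = 0 := S.closure.graph_fst_eq_zero_snd hw1 rfl
    have h22 : w22 = 0 := C.graph_fst_eq_zero_snd hw2 rfl
    subst h12; subst h22
    simp
  have hMcl : M.IsClosable := by
    refine ⟨(M.graph.topologicalClosure).toLinearPMap,
      (Submodule.toLinearPMap_graph_eq _ ?_).symm⟩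
    intro x hx h0
    rw [hclos] at hx
    exact hker x hx h0
  refine ⟨hMcl, fun u v => ?_⟩
  have hMg : M.closure.graph = (S.closure.graph.prod C.graph).map
      ((Φ : ((G × G) × H₁ × H₁) →L[ℂ] ((G × H₁) × G × H₁)) : ((G × G) × H₁ × H₁) →ₗ[ℂ] ((G × H₁) × G × H₁)) := by
    rw [← hMcl.graph_closure_eq_closure_graph]; exact hclos
  rw [LinearPMap.mem_domain_iff]
  constructor
  · rintro ⟨y, hy⟩
    rw [hMg] at hy
    obtain ⟨w, hw, hweq⟩ := Submodule.mem_map.mp hy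
    obtain ⟨hw1, hw2⟩ := Submodule.mem_prod.mp hw
    obtain ⟨⟨w11, w12⟩, w21, w22⟩ := w
    simp only [ContinuousLinearMap.coe_coe, ContinuousLinearEquiv.coe_coe, hΦ] at hweq
    have h1 : w11 = u := congrArg (fun p => p.1.1) hweq
    have h2 : w21 + T w11 = v := congrArg (fun p => p.1.2) hweq
    constructor
    · rw [← h1]
      exact LinearPMap.mem_domain_of_mem_graph hw1
    · have h3 : v - T u = w21 := by rw [← h2, ← h1]; abel
      rw [h3]
      exact LinearPMap.mem_domain_of_mem_graph hw2
  · rintro ⟨huS, hvC⟩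
    refine ⟨(S.closure ⟨u, huS⟩ + BCinv (C ⟨v - T u, hvC⟩), C ⟨v - T u, hvC⟩), ?_⟩
    rw [hMg]
    refine Submodule.mem_map.mpr ⟨((u, S.closure ⟨u, huS⟩), (v - T u, C ⟨v - T u, hvC⟩)),
      Submodule.mem_prod.mpr ⟨S.closure.mem_graph ⟨u, huS⟩, C.mem_graph ⟨v - T u, hvC⟩⟩, ?_⟩
    simp only [ContinuousLinearMap.coe_coe, ContinuousLinearEquiv.coe_coe, hΦ]
    simp [sub_add_cancel]
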